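/- Let K be a commutative ring and let φ and U be n×n matrices over K. Then there exists an n×n matrix V over K such that U·adj(φ) − φ·V = tr(U·adj(φ))·1ₙ, where tr denotes the trace and 1ₙ the n×n identity matrix. -/

import Mathlib

open Matrix

open Matrix TrivSqZeroExt

section aux
variable {K : Type*} [CommRing K] {n : ℕ}

lemma trace_stdBasisMatrix_mul (p q : Fin n) (c : K) (M : Matrix (Fin n) (Fin n) K) :
    (Matrix.single p q c * M).trace = c * M q p := by
  rw [Matrix.trace, Finset.sum_eq_single p]
  · simp
  · intro b _ hb
    simp [Matrix.diag, hb]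
  · simp

lemma key_std (φ : Matrix (Fin n) (Fin n) K) (p q : Fin n) (c : K) :
    ∃ V : Matrix (Fin n) (Fin n) K,
      Matrix.single p q c * φ.adjugate - φ * V = (c * φ.adjugate q p) • 1 := by
  classical
  let f : K →+* DualNumber K := algebraMap K (DualNumber K)
  let A : Matrix (Fin n) (Fin n) (DualNumber K) :=
    φ.map f + (DualNumber.eps : DualNumber K) • (Matrix.single p q c).map f
  have hAentry : ∀ i j, A i j = inl (φ i j) + DualNumber.eps * inl (Matrix.single p q c i j) := by
    intro i j
    simp only [A, Matrix.add_apply, Matrix.smul_apply, Matrix.map_apply, smul_eq_mul, f,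
      algebraMap_eq_inl]
  have hAfstE : ∀ i j, TrivSqZeroExt.fst (A i j) = φ i j := by
    intro i j
    rw [hAentry]
    simp [fst_mul]
  have hAsnd : ∀ i j, TrivSqZeroExt.snd (A i j) = Matrix.single p q c i j := by
    intro i j
    rw [hAentry]
    simp [snd_mul]
  let fst' : DualNumber K →+* K := (TrivSqZeroExt.fstHom K K K : DualNumber K →ₐ[K] K).toRingHom
  have hAfst : A.map fst' = φ := by
    ext i j
    exact hAfstE i j
  have hAdjFst : ∀ k l, TrivSqZeroExt.fst (adjugate A k l) = adjugate φ k l := by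
    have h := fst'.map_adjugate A
    rw [RingHom.mapMatrix_apply, RingHom.mapMatrix_apply, hAfst] at h
    intro k l
    exact congrFun (congrFun h k) l
  -- determinant computation
  have hA : A = updateRow (φ.map f) p
      ((φ.map f) p + (c • DualNumber.eps : DualNumber K) • (Pi.single q 1 : Fin n → DualNumber K)) := by
    funext i j
    rcases eq_or_ne i p with rfl | hi
    · rw [updateRow_self, hAentry]
      rcases eq_or_ne j q with rfl | hj
      · simp only [Pi.add_apply, Pi.smul_apply, Pi.single_eq_same, smul_eq_mul, mul_one,
          Matrix.map_apply, Matrix.single_apply_same]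
        rw [mul_comm (DualNumber.eps : DualNumber K), inl_mul_eq_smul]
        simp [f, algebraMap_eq_inl]
      · simp [f, algebraMap_eq_inl, hj, Ne.symm hj, Pi.single_apply]
    · simp [hAentry, updateRow_ne hi, hi, Ne.symm hi, f, algebraMap_eq_inl]
  have hdet : TrivSqZeroExt.snd (det A) = c * adjugate φ q p := by
    rw [hA, det_updateRow_add, updateRow_eq_self, det_updateRow_smul, ← adjugate_apply]
    have h1 : (adjugate (φ.map f)) q p = f (adjugate φ q p) := by
      have h1' := f.map_adjugate φ
      rw [RingHom.mapMatrix_apply, RingHom.mapMatrix_apply] at h1'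
      rw [← h1']
      rfl
    have h2 : det (φ.map f) = f (det φ) := (f.map_det φ).symm
    rw [h1, h2]
    show TrivSqZeroExt.snd (f (det φ)
        + (c • DualNumber.eps : DualNumber K) * f (adjugate φ q p)) = _
    simp [f, algebraMap_eq_inl, snd_mul, smul_eq_mul, mul_comm]
  -- main equation
  refine ⟨-((adjugate A).map TrivSqZeroExt.snd), ?_⟩
  have hmain := mul_adjugate A
  ext i j
  have h := congrArg TrivSqZeroExt.snd (congrFun (congrFun hmain i) j)
  rw [Matrix.mul_apply, Matrix.smul_apply] at h
  have hL : TrivSqZeroExt.snd (∑ k, A i k * adjugate A k j)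
      = ∑ k, (φ i k * TrivSqZeroExt.snd (adjugate A k j)
          + Matrix.single p q c i k * adjugate φ k j) := by
    rw [TrivSqZeroExt.snd_sum]
    refine Finset.sum_congr rfl fun k _ => ?_
    rw [snd_mul, hAfstE, hAsnd, hAdjFst]
    simp [smul_eq_mul, mul_comm]
  rw [hL] at h
  have hRr : TrivSqZeroExt.snd (det A • (1 : Matrix (Fin n) (Fin n) (DualNumber K)) i j)
      = (c * adjugate φ q p) * (1 : Matrix (Fin n) (Fin n) K) i j := by
    rw [Matrix.one_apply]
    rcases eq_or_ne i j with rfl | hij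
    · simp [hdet, smul_eq_mul]
    · simp [hij, smul_eq_mul]
  rw [hRr] at h
  simp only [Matrix.sub_apply, Matrix.mul_apply, Matrix.smul_apply, Matrix.map_apply,
    Matrix.neg_apply, mul_neg, smul_eq_mul]
  rw [sub_neg_eq_add, add_comm, ← Finset.sum_add_distrib]
  exact h

theorem statement11' (φ U : Matrix (Fin n) (Fin n) K) :
    ∃ V : Matrix (Fin n) (Fin n) K,
      U * φ.adjugate - φ * V = (U * φ.adjugate).trace • (1 : Matrix (Fin n) (Fin n) K) := by
  induction U using Matrix.induction_on' with
  | h_zero => exact ⟨0, by simp⟩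
  | h_add U₁ U₂ h₁ h₂ =>
    obtain ⟨V₁, h₁⟩ := h₁
    obtain ⟨V₂, h₂⟩ := h₂
    refine ⟨V₁ + V₂, ?_⟩
    rw [add_mul, Matrix.mul_add, add_sub_add_comm, h₁, h₂, trace_add, add_smul]
  | h_std_basis p q c =>
    obtain ⟨V, hV⟩ := key_std φ p q c
    exact ⟨V, by rw [hV, trace_stdBasisMatrix_mul]⟩

end aux

/-- Let `K` be a commutative ring and let `φ` and `U` be `n × n` matrices
over `K`.  Then there exists an `n × n` matrix `V` over `K` such that
`U * adjugate φ - φ * V = trace (U * adjugate φ) • 1`. -/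
theorem statement11 (K : Type*) [CommRing K] (n : ℕ)
    (φ U : Matrix (Fin n) (Fin n) K) :
    ∃ V : Matrix (Fin n) (Fin n) K,
      U * φ.adjugate - φ * V = (U * φ.adjugate).trace • (1 : Matrix (Fin n) (Fin n) K) := by
  exact statement11' φ U
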